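/- arXiv:0911.1446 — 5 statements merged into one kernel-verified Lean document; each statement's English description precedes it below -/
import Mathlib

section
/- For every m ∈ ℤ³, i ∈ {1,2,3} and ε ∈ {1,-1}, the identity (((s^i_m + ε c^i_m) · ∇)(s^i_m + ε c^i_m))(x) = ε m_i c^i_{2m}(x) holds for all x ∈ ℝ³. -/
/-- The vector field `c^i_m(x) = e_i cos⟨m, x⟩` on `ℝ³`. -/
noncomputable def vcos (m : Fin 3 → ℤ) (i : Fin 3) : (Fin 3 → ℝ) → (Fin 3 → ℝ) :=
  fun x => Pi.single i (Real.cos (∑ j, (m j : ℝ) * x j))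

/-- The vector field `s^i_m(x) = e_i sin⟨m, x⟩` on `ℝ³`. -/
noncomputable def vsin (m : Fin 3 → ℤ) (i : Fin 3) : (Fin 3 → ℝ) → (Fin 3 → ℝ) :=
  fun x => Pi.single i (Real.sin (∑ j, (m j : ℝ) * x j))

/-- The convective derivative `(u·∇)v`, with `((u·∇)v)_k = ∑_j u_j ∂_j v_k`. -/
noncomputable def conv (u v : (Fin 3 → ℝ) → (Fin 3 → ℝ)) : (Fin 3 → ℝ) → (Fin 3 → ℝ) :=
  fun x k => ∑ j, u x j * fderiv ℝ (fun y => v y k) x (Pi.single j 1)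

lemma lin_hasFDerivAt (m : Fin 3 → ℤ) (x : Fin 3 → ℝ) :
    HasFDerivAt (fun y : Fin 3 → ℝ => ∑ j, (m j : ℝ) * y j)
      (∑ j, (m j : ℝ) • (ContinuousLinearMap.proj j : (Fin 3 → ℝ) →L[ℝ] ℝ)) x := by
  apply HasFDerivAt.fun_sum
  intro j _
  exact ((ContinuousLinearMap.proj j : (Fin 3 → ℝ) →L[ℝ] ℝ).hasFDerivAt (x := x)).const_mul _

theorem stmt2 (m : Fin 3 → ℤ) (i : Fin 3) (ε : ℝ) (hε : ε = 1 ∨ ε = -1) (x : Fin 3 → ℝ) :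
    conv (vsin m i + ε • vcos m i) (vsin m i + ε • vcos m i) x
      = (ε * (m i : ℝ)) • vcos (2 • m) i x := by
  have hε2 : ε * ε = 1 := by rcases hε with h | h <;> rw [h] <;> ring
  set L : (Fin 3 → ℝ) → ℝ := fun y => ∑ j, (m j : ℝ) * y j with hLdef
  set L' : (Fin 3 → ℝ) →L[ℝ] ℝ :=
    ∑ j, (m j : ℝ) • (ContinuousLinearMap.proj j : (Fin 3 → ℝ) →L[ℝ] ℝ) with hL'def
  have hL : HasFDerivAt L L' x := lin_hasFDerivAt m x
  have hL'app : ∀ j : Fin 3, L' (Pi.single j 1) = (m j : ℝ) := by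
    intro j
    simp [hL'def, ContinuousLinearMap.sum_apply, Pi.single_apply, Finset.sum_ite_eq]
  funext k
  -- derivative of the k-th component of the vector field
  have hcomp : ∀ y : Fin 3 → ℝ,
      (vsin m i + ε • vcos m i) y k =
        Pi.single (M := fun _ : Fin 3 => ℝ) i (Real.sin (L y) + ε * Real.cos (L y)) k := by
    intro y
    simp [vsin, vcos, Pi.single_apply]
    split <;> simp [hLdef]
  by_cases hk : k = i
  · subst hk
    set D : (Fin 3 → ℝ) →L[ℝ] ℝ :=
      Real.cos (L x) • L' + ε • (-Real.sin (L x)) • L' with hD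
    have hF : HasFDerivAt (fun y => (vsin m k + ε • vcos m k) y k) D x := by
      have h1 : HasFDerivAt (fun y => Real.sin (L y)) (Real.cos (L x) • L') x :=
        (Real.hasDerivAt_sin (L x)).comp_hasFDerivAt x hL
      have h2 : HasFDerivAt (fun y => Real.cos (L y)) ((-Real.sin (L x)) • L') x :=
        (Real.hasDerivAt_cos (L x)).comp_hasFDerivAt x hL
      have h3 := h1.add (h2.const_mul ε)
      have h4 : (ε • (-Real.sin (L x)) • L') = ε • (-Real.sin (L x) • L') := by module
      rw [hD, h4]
      refine HasFDerivAt.congr_of_eventuallyEq h3 ?_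
      filter_upwards with y
      rw [hcomp y, Pi.single_eq_same]
      rfl
    have hDapp : ∀ j : Fin 3, D (Pi.single j 1) =
        (Real.cos (L x) - ε * Real.sin (L x)) * (m j : ℝ) := by
      intro j
      simp [hD, hL'app j]
      ring
    rw [conv]
    simp only [hF.fderiv]
    have : ∀ j : Fin 3,
        (vsin m k + ε • vcos m k) x j * D (Pi.single j 1)
        = if j = k then (Real.sin (L x) + ε * Real.cos (L x)) *
            ((Real.cos (L x) - ε * Real.sin (L x)) * (m j : ℝ)) else 0 := by
      intro j
      have : (vsin m k + ε • vcos m k) x j =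
          Pi.single (M := fun _ : Fin 3 => ℝ) k (Real.sin (L x) + ε * Real.cos (L x)) j := by
        simp [vsin, vcos, Pi.single_apply]
        split <;> simp [hLdef]
      rw [this, hDapp j]
      by_cases hj : j = k <;> simp [Pi.single_apply, hj]
    rw [Finset.sum_congr rfl (fun j _ => this j), Finset.sum_ite_eq' _ k]
    simp only [Finset.mem_univ, if_true]
    have hL2 : (∑ j, ((2 • m) j : ℝ) * x j) = 2 * L x := by
      simp [hLdef, Finset.mul_sum, mul_assoc, mul_comm]
      try ring_nf
      try rfl
    rw [vcos, hL2]
    simp only [Pi.smul_apply, Pi.single_eq_same, smul_eq_mul]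
    rw [Real.cos_two_mul']
    linear_combination (-(m k : ℝ) * Real.sin (L x) * Real.cos (L x)) * hε2
  · -- k ≠ i : both sides vanish
    have hF : (fun y => (vsin m i + ε • vcos m i) y k) = fun _ => (0 : ℝ) := by
      funext y
      rw [hcomp y, Pi.single_eq_of_ne hk]
    rw [conv, hF]
    simp [vcos, Pi.single_eq_of_ne hk, fderiv_const]
end

section
/- For every n ∈ ℤ³ and all indices a, b ∈ {1,2,3}, the identity (((c^a_n + c^b_n) · ∇)(c^a_n + c^b_n))(x) = -((n_a + n_b)/2)(s^a_{2n}(x) + s^b_{2n}(x)) holds for all x ∈ ℝ³. -/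
lemma coslin_hasFDeriv (m : Fin 3 → ℤ) (x : Fin 3 → ℝ) :
    HasFDerivAt (fun y : Fin 3 → ℝ => Real.cos (∑ i, (m i : ℝ) * y i))
      ((-Real.sin (∑ i, (m i : ℝ) * x i)) •
        (∑ i, (m i : ℝ) • (ContinuousLinearMap.proj i : (Fin 3 → ℝ) →L[ℝ] ℝ))) x := by
  have h : HasFDerivAt (fun y : Fin 3 → ℝ => ∑ i, (m i : ℝ) * y i)
      (∑ i, (m i : ℝ) • (ContinuousLinearMap.proj i : (Fin 3 → ℝ) →L[ℝ] ℝ)) x := by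
    apply HasFDerivAt.fun_sum
    intro i _
    simpa using ((ContinuousLinearMap.proj i :
      (Fin 3 → ℝ) →L[ℝ] ℝ).hasFDerivAt (x := x)).const_mul (m i : ℝ)
  exact h.cos

example (m : Fin 3 → ℤ) (x : Fin 3 → ℝ) (c : ℝ) (j : Fin 3) :
    fderiv ℝ (fun y : Fin 3 → ℝ => c * Real.cos (∑ i, (m i : ℝ) * y i)) x (Pi.single j 1)
      = c * (-Real.sin (∑ i, (m i : ℝ) * x i)) * m j := by
  rw [((coslin_hasFDeriv m x).const_mul c).fderiv]
  simp [ContinuousLinearMap.sum_apply, Pi.single_apply, mul_comm]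
  ring

theorem stmt3 (n : Fin 3 → ℤ) (a b : Fin 3) (x : Fin 3 → ℝ) :
    conv (vcos n a + vcos n b) (vcos n a + vcos n b) x
      = (-(((n a : ℝ) + (n b : ℝ)) / 2)) • (vsin (2 • n) a x + vsin (2 • n) b x) := by
  funext k
  have hv : (fun y => (vcos n a + vcos n b) y k)
      = fun y : Fin 3 → ℝ => ((if k = a then (1:ℝ) else 0) + (if k = b then 1 else 0))
          * Real.cos (∑ i, (n i : ℝ) * y i) := by
    funext y
    by_cases ha : k = a <;> by_cases hb : k = b <;>
      simp [vcos, Pi.single_apply, ha, hb] <;> split_ifs <;> ring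
  have hd : ∀ j, fderiv ℝ (fun y => (vcos n a + vcos n b) y k) x (Pi.single j 1)
      = ((if k = a then (1:ℝ) else 0) + (if k = b then 1 else 0))
          * (-Real.sin (∑ i, (n i : ℝ) * x i)) * n j := by
    intro j
    rw [hv, ((coslin_hasFDeriv n x).const_mul _).fderiv]
    simp only [ContinuousLinearMap.smul_apply, ContinuousLinearMap.sum_apply,
      ContinuousLinearMap.smul_apply, ContinuousLinearMap.proj_apply, Pi.single_apply,
      smul_eq_mul, mul_ite, mul_one, mul_zero, Finset.sum_ite_eq', Finset.mem_univ, if_true]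
    ring
  have h2 : ∑ i, ((2 • n i : ℤ) : ℝ) * x i = 2 * ∑ i, (n i : ℝ) * x i := by
    rw [Finset.mul_sum]
    refine Finset.sum_congr rfl fun i _ => ?_
    have : ((2 • n i : ℤ) : ℝ) = 2 * (n i : ℝ) := by
      push_cast [two_smul]
      ring
    rw [this]; ring
  simp only [conv, hd]
  simp only [vcos, vsin, Pi.add_apply, Pi.smul_apply, Pi.single_apply, smul_eq_mul]
  rw [h2, Real.sin_two_mul]
  simp only [add_mul, ite_mul, zero_mul, Finset.sum_add_distrib, Finset.sum_ite_eq',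
    Finset.mem_univ, if_true]
  by_cases ha : k = a <;> by_cases hb : k = b <;> by_cases hab : a = b <;>
    simp [ha, hb, hab, eq_comm] <;> ring
end

section
/- For every n ∈ ℤ³ and all indices a, b ∈ {1,2,3}, the identity (((s^a_n + s^b_n) · ∇)(s^a_n + s^b_n))(x) = ((n_a + n_b)/2)(s^a_{2n}(x) + s^b_{2n}(x)) holds for all x ∈ ℝ³. -/
lemma lin_fderiv (c : Fin 3 → ℝ) (x : Fin 3 → ℝ) :
    HasFDerivAt (fun y : Fin 3 → ℝ => ∑ i, c i * y i)
      (∑ i, c i • (ContinuousLinearMap.proj i : (Fin 3 → ℝ) →L[ℝ] ℝ)) x := by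
  apply HasFDerivAt.fun_sum
  intro i _
  exact ((ContinuousLinearMap.proj i : (Fin 3 → ℝ) →L[ℝ] ℝ).hasFDerivAt).const_mul (c i)

lemma sin_fderiv (c : Fin 3 → ℝ) (x : Fin 3 → ℝ) (j : Fin 3) :
    fderiv ℝ (fun y : Fin 3 → ℝ => Real.sin (∑ i, c i * y i)) x (Pi.single j 1)
      = Real.cos (∑ i, c i * x i) * c j := by
  rw [((lin_fderiv c x).sin).fderiv]
  simp [ContinuousLinearMap.proj_apply, Pi.single_apply, mul_comm]

theorem stmt4 (n : Fin 3 → ℤ) (a b : Fin 3) (x : Fin 3 → ℝ) :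
    conv (vsin n a + vsin n b) (vsin n a + vsin n b) x
      = (((n a : ℝ) + (n b : ℝ)) / 2) • (vsin (2 • n) a x + vsin (2 • n) b x) := by
  funext k
  have hcomp : ∀ i k : Fin 3, (fun y : Fin 3 → ℝ => vsin n i y k)
      = fun y => (if k = i then (1:ℝ) else 0) * Real.sin (∑ j, (n j : ℝ) * y j) := by
    intro i k; funext y; simp [vsin, Pi.single_apply]
  have hd : ∀ i k j : Fin 3,
      fderiv ℝ (fun y : Fin 3 → ℝ => vsin n i y k) x (Pi.single j 1)
        = (if k = i then (1:ℝ) else 0) * (Real.cos (∑ i, (n i : ℝ) * x i) * (n j : ℝ)) := by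
    intro i k j
    rw [hcomp i k]
    rcases eq_or_ne k i with h | h
    · simp [h, sin_fderiv (fun j => (n j : ℝ)) x j]
    · simp [h]
  set S := Real.sin (∑ i, (n i : ℝ) * x i)
  set C := Real.cos (∑ i, (n i : ℝ) * x i)
  have hL : conv (vsin n a + vsin n b) (vsin n a + vsin n b) x k
      = ∑ j, ((Pi.single a S + Pi.single b S : Fin 3 → ℝ) j) *
          (((if k = a then (1:ℝ) else 0) + (if k = b then (1:ℝ) else 0)) * (C * (n j : ℝ))) := by
    simp only [conv, Pi.add_apply]
    congr 1; funext j
    have : fderiv ℝ (fun y => vsin n a y k + vsin n b y k) x (Pi.single j 1)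
        = fderiv ℝ (fun y => vsin n a y k) x (Pi.single j 1)
          + fderiv ℝ (fun y => vsin n b y k) x (Pi.single j 1) := by
      have hda : DifferentiableAt ℝ (fun y : Fin 3 → ℝ => vsin n a y k) x := by
        rw [hcomp a k]
        exact ((lin_fderiv (fun j => (n j : ℝ)) x).sin.differentiableAt).const_mul _
      have hdb : DifferentiableAt ℝ (fun y : Fin 3 → ℝ => vsin n b y k) x := by
        rw [hcomp b k]
        exact ((lin_fderiv (fun j => (n j : ℝ)) x).sin.differentiableAt).const_mul _
      rw [fderiv_fun_add hda hdb]; rfl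
    rw [this, hd a k j, hd b k j, vsin, vsin]
    ring
  have h1 : ∀ i : Fin 3, ∑ j, (if j = i then S else 0) * (n j : ℝ) = S * (n i : ℝ) := by
    intro i
    rw [Finset.sum_eq_single i]
    · simp
    · intro c _ hc; simp [hc]
    · simp
  have hsum : ∑ j, ((Pi.single a S + Pi.single b S : Fin 3 → ℝ) j) * (n j : ℝ)
      = S * ((n a : ℝ) + (n b : ℝ)) := by
    simp only [Pi.add_apply, Pi.single_apply, add_mul, Finset.sum_add_distrib, h1]
    ring
  have hc2 : ∀ i : Fin 3, (((2 • n) i : ℤ) : ℝ) = 2 * (n i : ℝ) := by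
    intro i
    have : (2 • n) i = 2 * n i := by simp [Pi.smul_apply, two_mul, two_nsmul]
    rw [this]; push_cast; ring
  have hsm : ∑ i, (((2 • n) i : ℤ) : ℝ) * x i = 2 * ∑ i, (n i : ℝ) * x i := by
    rw [Finset.mul_sum]
    refine Finset.sum_congr rfl fun i _ => ?_
    rw [hc2]; ring
  have h2 : Real.sin (∑ i, (((2 • n) i : ℤ) : ℝ) * x i) = 2 * S * C := by
    rw [hsm, Real.sin_two_mul]
  rw [hL]
  rw [show (∑ j, ((Pi.single a S + Pi.single b S : Fin 3 → ℝ) j) *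
      (((if k = a then (1:ℝ) else 0) + (if k = b then (1:ℝ) else 0)) * (C * (n j : ℝ))))
    = (((if k = a then (1:ℝ) else 0) + (if k = b then (1:ℝ) else 0)) * C)
      * ∑ j, ((Pi.single a S + Pi.single b S : Fin 3 → ℝ) j) * (n j : ℝ) by
      rw [Finset.mul_sum]; congr 1; funext j; ring]
  rw [hsum]
  have hva : vsin (2 • n) a x k = if k = a then 2 * S * C else 0 := by
    simp only [vsin, Pi.single_apply, h2]
  have hvb : vsin (2 • n) b x k = if k = b then 2 * S * C else 0 := by
    simp only [vsin, Pi.single_apply, h2]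
  rw [Pi.smul_apply, Pi.add_apply, hva, hvb, smul_eq_mul]
  split <;> split <;> ring
end

section
/- Let j ≥ 1 be an integer, let V_j denote the real linear span (inside the vector space of smooth vector fields ℝ³ → ℝ³) of the functions {c^i_m, s^i_m : m ∈ ℤ³, ‖m‖₁ ≤ 2^j, i ∈ {1,2,3}}, and similarly V_{j-1} with ‖m‖₁ ≤ 2^{j-1}. Then for every w ∈ V_j there exist p ∈ ℕ, a function η ∈ V_{j-1} and functions ζ^1, …, ζ^p ∈ V_{j-1} such that w = η - Σ_{i=1}^p (ζ^i · ∇) ζ^i. -/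
/-- The span of the trigonometric vector fields `c^i_m, s^i_m` with `‖m‖₁ ≤ 2^j`. -/
noncomputable def trigSpan (j : ℕ) : Submodule ℝ ((Fin 3 → ℝ) → (Fin 3 → ℝ)) :=
  Submodule.span ℝ
    {f | ∃ (m : Fin 3 → ℤ) (i : Fin 3), (∑ a, |m a|) ≤ 2 ^ j ∧ (f = vcos m i ∨ f = vsin m i)}

open Real

noncomputable def ph (m : Fin 3 → ℤ) : (Fin 3 → ℝ) → ℝ := fun y => ∑ j, (m j : ℝ) * y j

noncomputable def phL (m : Fin 3 → ℤ) : (Fin 3 → ℝ) →L[ℝ] ℝ :=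
  ∑ j, (m j : ℝ) • ContinuousLinearMap.proj j

lemma phL_apply (m : Fin 3 → ℤ) (y : Fin 3 → ℝ) : phL m y = ∑ j, (m j : ℝ) * y j := by
  simp [phL, ContinuousLinearMap.sum_apply]

lemma hasFDerivAt_ph (m : Fin 3 → ℤ) (x : Fin 3 → ℝ) : HasFDerivAt (ph m) (phL m) x := by
  have : ph m = ⇑(phL m) := by funext y; simp [ph, phL_apply]
  rw [this]; exact (phL m).hasFDerivAt

lemma phL_single (m : Fin 3 → ℤ) (t : Fin 3) : phL m (Pi.single t 1) = (m t : ℝ) := by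
  rw [phL_apply]; simp [Pi.single_apply]

lemma hasFDerivAt_trig (a : Fin 3 → ℤ) (e1 e2 : ℝ) (x : Fin 3 → ℝ) :
    HasFDerivAt (fun y => e1 * Real.cos (ph a y) + e2 * Real.sin (ph a y))
      ((e2 * Real.cos (ph a x) - e1 * Real.sin (ph a x)) • phL a) x := by
  have h := (((hasFDerivAt_ph a x).cos).const_mul e1).add (((hasFDerivAt_ph a x).sin).const_mul e2)
  convert h using 1
  ext y
  simp [ContinuousLinearMap.smul_apply]
  all_goals try rfl
  ext y
  simp
  ring

lemma hasFDerivAt_single_comp {k i : Fin 3} {φ : (Fin 3 → ℝ) → ℝ} {φ' : (Fin 3 → ℝ) →L[ℝ] ℝ}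
    {x : Fin 3 → ℝ} (hφ : HasFDerivAt φ φ' x) :
    HasFDerivAt (fun y => (Pi.single i (φ y) : Fin 3 → ℝ) k) (if k = i then φ' else 0) x := by
  by_cases h : k = i
  · subst h; simpa [Pi.single_eq_same] using hφ
  · simp only [Pi.single_eq_of_ne h, if_neg h]
    exact hasFDerivAt_const 0 x

lemma conv_pair (a b : Fin 3 → ℤ) (t i : Fin 3) (e1 e2 e3 e4 : ℝ) :
    conv
      (fun y => Pi.single t (e1 * cos (ph a y) + e2 * sin (ph a y)) +
        Pi.single i (e3 * cos (ph b y) + e4 * sin (ph b y)))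
      (fun y => Pi.single t (e1 * cos (ph a y) + e2 * sin (ph a y)) +
        Pi.single i (e3 * cos (ph b y) + e4 * sin (ph b y))) =
    fun x =>
      Pi.single t
        (((e1 * cos (ph a x) + e2 * sin (ph a x)) * (a t : ℝ) +
          (e3 * cos (ph b x) + e4 * sin (ph b x)) * (a i : ℝ)) *
          (e2 * cos (ph a x) - e1 * sin (ph a x))) +
      Pi.single i
        (((e1 * cos (ph a x) + e2 * sin (ph a x)) * (b t : ℝ) +
          (e3 * cos (ph b x) + e4 * sin (ph b x)) * (b i : ℝ)) *
          (e4 * cos (ph b x) - e3 * sin (ph b x))) := by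
  funext x k
  have hfd : ∀ k : Fin 3,
      fderiv ℝ (fun y => (Pi.single t (e1 * cos (ph a y) + e2 * sin (ph a y)) +
        Pi.single i (e3 * cos (ph b y) + e4 * sin (ph b y)) : Fin 3 → ℝ) k) x =
      (if k = t then (e2 * cos (ph a x) - e1 * sin (ph a x)) • phL a else 0) +
      (if k = i then (e4 * cos (ph b x) - e3 * sin (ph b x)) • phL b else 0) := by
    intro k
    exact ((hasFDerivAt_single_comp (hasFDerivAt_trig a e1 e2 x)).add
      (hasFDerivAt_single_comp (hasFDerivAt_trig b e3 e4 x))).fderiv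
  show (∑ j, _ * _) = _
  simp only [conv, hfd]
  simp only [ContinuousLinearMap.add_apply, ContinuousLinearMap.smul_apply, phL_single,
    ContinuousLinearMap.zero_apply, apply_ite (fun (L : (Fin 3 → ℝ) →L[ℝ] ℝ) => L (Pi.single _ 1)),
    smul_eq_mul, Pi.add_apply, Pi.single_apply]
  have hL : ∀ (c : ℝ) (m : Fin 3 → ℤ) (s : Fin 3), (c • phL m) (Pi.single s 1) = c * (m s : ℝ) := by
    intro c m s; simp [phL_single]
  by_cases hti : t = i
  · subst hti
    by_cases hk : k = t <;>
      simp [hk, hL, phL_single, ite_mul, mul_ite, zero_mul, mul_zero, add_mul, mul_add,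
        Finset.sum_add_distrib, Finset.sum_ite_eq', Finset.mem_univ] <;> ring
  · by_cases hkt : k = t
    · have hki : ¬ k = i := by rw [hkt]; exact hti
      simp [hkt, hki, hti, hL, phL_single, ite_mul, mul_ite, zero_mul, mul_zero, add_mul, mul_add,
        Finset.sum_add_distrib, Finset.sum_ite_eq', Finset.mem_univ]
      ring
    · by_cases hki : k = i
      · have hit : ¬ i = t := fun h => hti h.symm
        simp [hkt, hki, hit, hL, phL_single, ite_mul, mul_ite, zero_mul, mul_zero, add_mul, mul_add,
          Finset.sum_add_distrib, Finset.sum_ite_eq', Finset.mem_univ]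
        ring
      · simp [hkt, hki, hL, phL_single, ite_mul, mul_ite, zero_mul, mul_zero, add_mul, mul_add,
          Finset.sum_add_distrib, Finset.sum_ite_eq', Finset.mem_univ]

lemma decomp_cos_sin (a b : Fin 3 → ℤ) (t i : Fin 3) (c : ℝ) :
    vcos a t + c • vsin b i = fun y =>
      Pi.single t (1 * cos (ph a y) + 0 * sin (ph a y)) +
      Pi.single i (0 * cos (ph b y) + c * sin (ph b y)) := by
  funext y k
  simp [vcos, vsin, ph, Pi.single_apply]

lemma decomp_sin_cos (a b : Fin 3 → ℤ) (t i : Fin 3) (c : ℝ) :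
    vsin a t + c • vcos b i = fun y =>
      Pi.single t (0 * cos (ph a y) + 1 * sin (ph a y)) +
      Pi.single i (c * cos (ph b y) + 0 * sin (ph b y)) := by
  funext y k
  simp [vcos, vsin, ph, Pi.single_apply]

lemma decomp_cos_cos (a b : Fin 3 → ℤ) (t i : Fin 3) (c : ℝ) :
    vcos a t + (-c) • vcos b i = fun y =>
      Pi.single t (1 * cos (ph a y) + 0 * sin (ph a y)) +
      Pi.single i ((-c) * cos (ph b y) + 0 * sin (ph b y)) := by
  funext y k
  simp [vcos, vsin, ph, Pi.single_apply]
  split <;> simp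

lemma decomp_sin_sin (a b : Fin 3 → ℤ) (t i : Fin 3) (c : ℝ) :
    vsin a t + c • vsin b i = fun y =>
      Pi.single t (0 * cos (ph a y) + 1 * sin (ph a y)) +
      Pi.single i (0 * cos (ph b y) + c * sin (ph b y)) := by
  funext y k
  simp [vcos, vsin, ph, Pi.single_apply]

lemma pair_cos (a b : Fin 3 → ℤ) (t i : Fin 3) (c : ℝ) :
    conv (vcos a t + c • vsin b i) (vcos a t + c • vsin b i) +
      conv (vsin a t + c • vcos b i) (vsin a t + c • vcos b i) =
    fun x => Pi.single t (c * (a i : ℝ) * cos (ph a x + ph b x)) +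
             Pi.single i (c * (b t : ℝ) * cos (ph a x + ph b x)) := by
  rw [decomp_cos_sin, decomp_sin_cos, conv_pair, conv_pair]
  funext x k
  simp only [Pi.add_apply, Pi.single_apply, cos_add]
  by_cases hkt : k = t <;> by_cases hki : k = i <;> simp [hkt, hki] <;> split_ifs <;> ring

lemma pair_sin (a b : Fin 3 → ℤ) (t i : Fin 3) (c : ℝ) :
    conv (vcos a t + (-c) • vcos b i) (vcos a t + (-c) • vcos b i) +
      conv (vsin a t + c • vsin b i) (vsin a t + c • vsin b i) =
    fun x => Pi.single t (c * (a i : ℝ) * sin (ph a x + ph b x)) +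
             Pi.single i (c * (b t : ℝ) * sin (ph a x + ph b x)) := by
  rw [decomp_cos_cos, decomp_sin_sin, conv_pair, conv_pair]
  funext x k
  simp only [Pi.add_apply, Pi.single_apply, sin_add]
  by_cases hkt : k = t <;> by_cases hki : k = i <;> simp [hkt, hki] <;> split_ifs <;> ring


lemma nat3 (n0 n1 n2 V : ℕ) (h : V ≤ n0 + n1 + n2) :
    ∃ r0 r1 r2 : ℕ, r0 ≤ n0 ∧ r1 ≤ n1 ∧ r2 ≤ n2 ∧ r0 + r1 + r2 = V :=
  ⟨min n0 V, min n1 (V - min n0 V), min n2 (V - min n0 V - min n1 (V - min n0 V)), by omega⟩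

lemma signSplit (M : ℤ) (r : ℕ) (hr : (r : ℤ) ≤ (M.natAbs : ℤ)) :
    ∃ x : ℤ, |x| = (r : ℤ) ∧ |M - x| = (M.natAbs : ℤ) - r ∧ (M = 0 → x = 0) := by
  refine ⟨if M < 0 then -(r : ℤ) else (r : ℤ), ?_, ?_, ?_⟩ <;> split_ifs <;>
    first
      | omega
      | (simp only [Int.abs_eq_natAbs]; omega)

lemma split3 (m : Fin 3 → ℤ) (N : ℤ) (hN : 1 ≤ N) (h2 : (∑ k, |m k|) ≤ 2 * N)
    (h1 : N < ∑ k, |m k|) :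
    ∃ a b : Fin 3 → ℤ, (∀ k, a k + b k = m k) ∧ (∑ k, |a k|) ≤ N ∧ (∑ k, |b k|) ≤ N ∧
      (∀ k, m k = 0 → a k = 0) ∧ (1 ≤ ∑ k, |b k|) := by
  simp only [Fin.sum_univ_three, Int.abs_eq_natAbs] at h2 h1
  obtain ⟨r0, r1, r2, hr0, hr1, hr2, hsum⟩ :=
    nat3 (m 0).natAbs (m 1).natAbs (m 2).natAbs
      (((m 0).natAbs + (m 1).natAbs + (m 2).natAbs) - N.toNat) (by omega)
  obtain ⟨x0, u0, u1, u2⟩ := signSplit (m 0) r0 (by omega)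
  obtain ⟨x1, v0, v1, v2⟩ := signSplit (m 1) r1 (by omega)
  obtain ⟨x2, w0, w1, w2⟩ := signSplit (m 2) r2 (by omega)
  refine ⟨![x0, x1, x2], ![m 0 - x0, m 1 - x1, m 2 - x2], ?_, ?_, ?_, ?_, ?_⟩
  · intro k; fin_cases k <;> simp
  · simp only [Fin.sum_univ_three, Matrix.cons_val_zero, Matrix.cons_val_one, Matrix.head_cons,
      Matrix.cons_val_two, Matrix.tail_cons, u0, v0, w0]
    omega
  · simp only [Fin.sum_univ_three, Matrix.cons_val_zero, Matrix.cons_val_one, Matrix.head_cons,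
      Matrix.cons_val_two, Matrix.tail_cons, u1, v1, w1]
    omega
  · intro k hk
    fin_cases k <;> simp only [Matrix.cons_val_zero, Matrix.cons_val_one, Matrix.head_cons,
      Matrix.cons_val_two, Matrix.tail_cons] <;> [exact u2 hk; exact v2 hk; exact w2 hk]
  · simp only [Fin.sum_univ_three, Matrix.cons_val_zero, Matrix.cons_val_one, Matrix.head_cons,
      Matrix.cons_val_two, Matrix.tail_cons, u1, v1, w1]
    omega

def P (n : ℕ) (w : (Fin 3 → ℝ) → (Fin 3 → ℝ)) : Prop :=
  ∃ (p : ℕ) (η : (Fin 3 → ℝ) → (Fin 3 → ℝ)) (ζ : Fin p → (Fin 3 → ℝ) → (Fin 3 → ℝ)),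
    η ∈ trigSpan n ∧ (∀ i, ζ i ∈ trigSpan n) ∧ w = η - ∑ i, conv (ζ i) (ζ i)

lemma P_of_mem {n : ℕ} {w} (hw : w ∈ trigSpan n) : P n w :=
  ⟨0, w, ![], hw, fun i => i.elim0, by simp⟩

lemma P_add {n : ℕ} {w1 w2} (h1 : P n w1) (h2 : P n w2) : P n (w1 + w2) := by
  obtain ⟨p1, η1, ζ1, hη1, hζ1, e1⟩ := h1
  obtain ⟨p2, η2, ζ2, hη2, hζ2, e2⟩ := h2
  refine ⟨p1 + p2, η1 + η2, Fin.append ζ1 ζ2, add_mem hη1 hη2, ?_, ?_⟩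
  · intro i
    refine Fin.addCases (fun l => ?_) (fun r => ?_) i
    · rw [Fin.append_left]; exact hζ1 l
    · rw [Fin.append_right]; exact hζ2 r
  · have hs : ∑ i, conv (Fin.append ζ1 ζ2 i) (Fin.append ζ1 ζ2 i) =
        (∑ i, conv (ζ1 i) (ζ1 i)) + ∑ i, conv (ζ2 i) (ζ2 i) := by
      rw [Fin.sum_univ_add]
      congr 1 <;> refine Finset.sum_congr rfl fun i _ => ?_ <;>
        simp [Fin.append_left, Fin.append_right]
    rw [hs, e1, e2]; abel

lemma P_sum {n : ℕ} {N : ℕ} (f : Fin N → (Fin 3 → ℝ) → (Fin 3 → ℝ))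
    (hf : ∀ i, P n (f i)) : P n (∑ i, f i) :=
  Finset.sum_induction f (P n) (fun _ _ ha hb => P_add ha hb)
    (P_of_mem (Submodule.zero_mem _)) (fun i _ => hf i)

lemma mem_trigSpan_vcos {n : ℕ} {m : Fin 3 → ℤ} {i : Fin 3} (h : (∑ a, |m a|) ≤ 2 ^ n) :
    vcos m i ∈ trigSpan n :=
  Submodule.subset_span ⟨m, i, h, Or.inl rfl⟩

lemma mem_trigSpan_vsin {n : ℕ} {m : Fin 3 → ℤ} {i : Fin 3} (h : (∑ a, |m a|) ≤ 2 ^ n) :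
    vsin m i ∈ trigSpan n :=
  Submodule.subset_span ⟨m, i, h, Or.inr rfl⟩

lemma P_pair_cos {n : ℕ} (a b : Fin 3 → ℤ) (t i : Fin 3) (c : ℝ)
    (ha : (∑ k, |a k|) ≤ 2 ^ n) (hb : (∑ k, |b k|) ≤ 2 ^ n) :
    P n (fun x => Pi.single t (c * (a i : ℝ) * Real.cos (ph a x + ph b x)) +
      Pi.single i (c * (b t : ℝ) * Real.cos (ph a x + ph b x))) := by
  refine ⟨2, 0, ![vcos a t + (-c) • vsin b i, vsin a t + (-c) • vcos b i],
    Submodule.zero_mem _, ?_, ?_⟩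
  · intro l
    fin_cases l <;>
      simp only [Matrix.cons_val_zero, Matrix.cons_val_one, Matrix.head_cons]
    · exact add_mem (mem_trigSpan_vcos ha) (Submodule.smul_mem _ _ (mem_trigSpan_vsin hb))
    · exact add_mem (mem_trigSpan_vsin ha) (Submodule.smul_mem _ _ (mem_trigSpan_vcos hb))
  · have hs : ∑ l : Fin 2, conv (![vcos a t + (-c) • vsin b i, vsin a t + (-c) • vcos b i] l)
        (![vcos a t + (-c) • vsin b i, vsin a t + (-c) • vcos b i] l) =
        conv (vcos a t + (-c) • vsin b i) (vcos a t + (-c) • vsin b i) +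
        conv (vsin a t + (-c) • vcos b i) (vsin a t + (-c) • vcos b i) := by
      simp [Fin.sum_univ_two]
    rw [hs, pair_cos a b t i (-c)]
    funext x k
    simp only [Pi.sub_apply, Pi.zero_apply, Pi.add_apply, Pi.single_apply, zero_sub, neg_add_rev]
    by_cases hkt : k = t <;> by_cases hki : k = i <;> simp [hkt, hki] <;> split_ifs <;> ring

lemma P_pair_sin {n : ℕ} (a b : Fin 3 → ℤ) (t i : Fin 3) (c : ℝ)
    (ha : (∑ k, |a k|) ≤ 2 ^ n) (hb : (∑ k, |b k|) ≤ 2 ^ n) :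
    P n (fun x => Pi.single t (c * (a i : ℝ) * Real.sin (ph a x + ph b x)) +
      Pi.single i (c * (b t : ℝ) * Real.sin (ph a x + ph b x))) := by
  refine ⟨2, 0, ![vcos a t + (-(-c)) • vcos b i, vsin a t + (-c) • vsin b i],
    Submodule.zero_mem _, ?_, ?_⟩
  · intro l
    fin_cases l <;>
      simp only [Matrix.cons_val_zero, Matrix.cons_val_one, Matrix.head_cons]
    · exact add_mem (mem_trigSpan_vcos ha) (Submodule.smul_mem _ _ (mem_trigSpan_vcos hb))
    · exact add_mem (mem_trigSpan_vsin ha) (Submodule.smul_mem _ _ (mem_trigSpan_vsin hb))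
  · have hs : ∑ l : Fin 2, conv (![vcos a t + (-(-c)) • vcos b i, vsin a t + (-c) • vsin b i] l)
        (![vcos a t + (-(-c)) • vcos b i, vsin a t + (-c) • vsin b i] l) =
        conv (vcos a t + (-(-c)) • vcos b i) (vcos a t + (-(-c)) • vcos b i) +
        conv (vsin a t + (-c) • vsin b i) (vsin a t + (-c) • vsin b i) := by
      simp [Fin.sum_univ_two]
    rw [hs, pair_sin a b t i (-c)]
    funext x k
    simp only [Pi.sub_apply, Pi.zero_apply, Pi.add_apply, Pi.single_apply, zero_sub, neg_add_rev]
    by_cases hkt : k = t <;> by_cases hki : k = i <;> simp [hkt, hki] <;> split_ifs <;> ring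

lemma ph_add {a b m : Fin 3 → ℤ} (hab : ∀ k, a k + b k = m k) (x : Fin 3 → ℝ) :
    ph a x + ph b x = ph m x := by
  simp only [ph, ← Finset.sum_add_distrib]
  refine Finset.sum_congr rfl fun j _ => ?_
  rw [← hab j]
  push_cast
  ring

lemma P_gen {n : ℕ} (m : Fin 3 → ℤ) (i : Fin 3) (δ : ℝ)
    (hm : (∑ k, |m k|) ≤ 2 * 2 ^ n) :
    P n (δ • vcos m i) ∧ P n (δ • vsin m i) := by
  by_cases hsmall : (∑ k, |m k|) ≤ 2 ^ n
  · exact ⟨P_of_mem (Submodule.smul_mem _ _ (mem_trigSpan_vcos hsmall)),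
      P_of_mem (Submodule.smul_mem _ _ (mem_trigSpan_vsin hsmall))⟩
  · push_neg at hsmall
    obtain ⟨a, b, hab, ha, hb, ha0, hb1⟩ := split3 m (2 ^ n) (one_le_pow₀ one_le_two) hm hsmall
    by_cases hmi : m i = 0
    · -- use t with b t ≠ 0, note a i = 0
      have hai : a i = 0 := ha0 i hmi
      have hbt : ∃ t, b t ≠ 0 := by
        by_contra h
        push_neg at h
        simp [h] at hb1
      obtain ⟨t, hbt⟩ := hbt
      have hbtR : ((b t : ℝ)) ≠ 0 := Int.cast_ne_zero.mpr hbt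
      constructor
      · have h := P_pair_cos a b t i (δ / (b t : ℝ)) ha hb
        convert h using 1
        funext x k
        rw [ph_add hab]
        simp only [ph, Pi.smul_apply, vcos, Pi.add_apply, Pi.single_apply, smul_eq_mul, hai,
          Int.cast_zero]
        by_cases hkt : k = t <;> by_cases hki : k = i <;> simp [hkt, hki] <;> field_simp <;> simp
      · have h := P_pair_sin a b t i (δ / (b t : ℝ)) ha hb
        convert h using 1
        funext x k
        rw [ph_add hab]
        simp only [ph, Pi.smul_apply, vsin, Pi.add_apply, Pi.single_apply, smul_eq_mul, hai,
          Int.cast_zero]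
        by_cases hkt : k = t <;> by_cases hki : k = i <;> simp [hkt, hki] <;> field_simp <;> simp
    · have hmiR : ((m i : ℝ)) ≠ 0 := Int.cast_ne_zero.mpr hmi
      have habi : (a i : ℝ) + (b i : ℝ) = (m i : ℝ) := by exact_mod_cast congrArg Int.cast (hab i)
      constructor
      · have h := P_pair_cos a b i i (δ / (m i : ℝ)) ha hb
        convert h using 1
        funext x k
        rw [ph_add hab]
        simp only [ph, Pi.smul_apply, vcos, Pi.add_apply, Pi.single_apply, smul_eq_mul]
        by_cases hki : k = i <;> simp [hki]
        field_simp
        rw [← habi]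
      · have h := P_pair_sin a b i i (δ / (m i : ℝ)) ha hb
        convert h using 1
        funext x k
        rw [ph_add hab]
        simp only [ph, Pi.smul_apply, vsin, Pi.add_apply, Pi.single_apply, smul_eq_mul]
        by_cases hki : k = i <;> simp [hki]
        field_simp
        rw [← habi]

theorem stmt8 (j : ℕ) (hj : 1 ≤ j) (w : (Fin 3 → ℝ) → (Fin 3 → ℝ)) (hw : w ∈ trigSpan j) :
    ∃ (p : ℕ) (η : (Fin 3 → ℝ) → (Fin 3 → ℝ)) (ζ : Fin p → (Fin 3 → ℝ) → (Fin 3 → ℝ)),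
      η ∈ trigSpan (j - 1) ∧ (∀ i, ζ i ∈ trigSpan (j - 1)) ∧
        w = η - ∑ i, conv (ζ i) (ζ i) := by
  have hpow : (2 : ℤ) ^ j = 2 * 2 ^ (j - 1) := by
    rw [← pow_succ']
    congr 1
    omega
  rw [trigSpan, Submodule.mem_span_set'] at hw
  obtain ⟨N, f, g, hgw⟩ := hw
  have : P (j - 1) w := by
    rw [← hgw]
    refine P_sum _ fun l => ?_
    obtain ⟨m, i, hm, hfg⟩ := (g l).2
    rcases hfg with h | h <;> rw [h] <;> [exact (P_gen m i (f l) (hpow ▸ hm)).1;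
      exact (P_gen m i (f l) (hpow ▸ hm)).2]
  exact this
end

section
/- Let X, Y, Z be real Banach spaces and B : X × Y → Z a continuous bilinear map. Let T > 0 and let ζ : ℝ → X be a bounded strongly measurable function satisfying ζ(t + 1) = ζ(t) and ζ(t + 1/2) = -ζ(t) for all t ∈ ℝ. Let χ_n : [0,T] → Y be a sequence of continuous functions that is uniformly bounded and uniformly equicontinuous (i.e., sup_n sup_t ‖χ_n(t)‖ < ∞, and for every ε > 0 there is δ > 0 such that ‖χ_n(t) - χ_n(s)‖ ≤ ε for all n whenever |t - s| ≤ δ). Then for every t₀ ∈ [0,T], the Bochner integrals ∫₀^{t₀} B(ζ(n t / T), χ_n(t)) dt converge to 0 in Z as n → ∞. -/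
open MeasureTheory Filter

private lemma aux_intervalIntegrable {E : Type*} [NormedAddCommGroup E]
    (f : ℝ → E) (a b C : ℝ)
    (hm : AEStronglyMeasurable f (volume.restrict (Set.uIoc a b)))
    (hb : ∀ᵐ t ∂(volume.restrict (Set.uIoc a b)), ‖f t‖ ≤ C) :
    IntervalIntegrable f volume a b := by
  rw [intervalIntegrable_iff]
  have hconst : IntegrableOn (fun _ : ℝ => C) (Set.uIoc a b) volume := by
    refine integrableOn_const (lt_top_iff_ne_top.1 ?_) (by simp)
    rw [Set.uIoc]
    exact measure_Ioc_lt_top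
  exact hconst.mono' hm hb

set_option maxHeartbeats 1000000 in
theorem stmt12
    (X Y Z : Type*)
    [NormedAddCommGroup X] [NormedSpace ℝ X] [CompleteSpace X]
    [NormedAddCommGroup Y] [NormedSpace ℝ Y] [CompleteSpace Y]
    [NormedAddCommGroup Z] [NormedSpace ℝ Z] [CompleteSpace Z]
    (B : X →L[ℝ] Y →L[ℝ] Z)
    (T : ℝ) (hT : 0 < T)
    (ζ : ℝ → X) (hζmeas : StronglyMeasurable ζ) (hζbdd : ∃ C, ∀ t, ‖ζ t‖ ≤ C)
    (hper : ∀ t, ζ (t + 1) = ζ t) (hanti : ∀ t, ζ (t + 1 / 2) = -ζ t)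
    (χ : ℕ → ℝ → Y) (hχcont : ∀ n, ContinuousOn (χ n) (Set.Icc 0 T))
    (hχbdd : ∃ C, ∀ n, ∀ t ∈ Set.Icc (0 : ℝ) T, ‖χ n t‖ ≤ C)
    (hequi : ∀ ε > (0 : ℝ), ∃ δ > (0 : ℝ), ∀ (n : ℕ), ∀ s ∈ Set.Icc (0 : ℝ) T,
      ∀ t ∈ Set.Icc (0 : ℝ) T, |t - s| ≤ δ → ‖χ n t - χ n s‖ ≤ ε)
    (t₀ : ℝ) (ht₀ : t₀ ∈ Set.Icc 0 T) :
    Tendsto (fun n : ℕ => ∫ t in (0 : ℝ)..t₀, B (ζ ((n : ℝ) * t / T)) (χ n t))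
      atTop (nhds 0) := by
  obtain ⟨ht₀0, ht₀T⟩ := ht₀
  obtain ⟨Cζ, hCζ⟩ := hζbdd
  obtain ⟨Cχ, hCχ⟩ := hχbdd
  have hCζ0 : 0 ≤ Cζ := (norm_nonneg _).trans (hCζ 0)
  have hCχ0 : 0 ≤ Cχ := (norm_nonneg _).trans (hCχ 0 0 ⟨le_refl 0, hT.le⟩)
  -- ζ is interval integrable everywhere
  have hζint : ∀ a b : ℝ, IntervalIntegrable ζ volume a b := fun a b =>
    aux_intervalIntegrable ζ a b Cζ hζmeas.aestronglyMeasurable.restrict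
      (Eventually.of_forall fun t => hCζ t)
  have hperiodic : Function.Periodic ζ 1 := hper
  -- the integral of ζ over one period vanishes
  have hint01 : (∫ u in (0:ℝ)..1, ζ u) = 0 := by
    have h1 : (∫ u in (0:ℝ)..1, ζ u)
        = (∫ u in (0:ℝ)..(1/2 : ℝ), ζ u) + ∫ u in (1/2:ℝ)..1, ζ u :=
      (intervalIntegral.integral_add_adjacent_intervals (hζint 0 (1/2)) (hζint (1/2) 1)).symm
    have h2 : (∫ u in (0:ℝ)..(1/2:ℝ), ζ (u + 1/2)) = ∫ u in (1/2:ℝ)..1, ζ u := by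
      rw [intervalIntegral.integral_comp_add_right]
      norm_num
    have h3 : (∫ u in (0:ℝ)..(1/2:ℝ), ζ (u + 1/2)) = - ∫ u in (0:ℝ)..(1/2:ℝ), ζ u := by
      simp_rw [hanti]
      exact intervalIntegral.integral_neg
    rw [h1, ← h2, h3]
    abel
  -- the primitive of ζ
  set F : ℝ → X := fun t => ∫ u in (0:ℝ)..t, ζ u with hFdef
  have hFper : Function.Periodic F 1 := by
    intro t
    have h1 : F (t + 1) - F t = ∫ u in t..(t+1), ζ u :=
      intervalIntegral.integral_interval_sub_left (hζint 0 (t+1)) (hζint 0 t)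
    have h2 : (∫ u in t..(t+1), ζ u) = ∫ u in (0:ℝ)..(0+1:ℝ), ζ u :=
      hperiodic.intervalIntegral_add_eq t 0
    rw [h2] at h1
    norm_num [hint01] at h1
    exact sub_eq_zero.1 h1
  have hFbdd : ∀ t, ‖F t‖ ≤ Cζ := by
    intro t
    have h1 : F (Int.fract t) = F t := by
      have := hFper.sub_int_mul_eq (x := t) ⌊t⌋
      rwa [mul_one, Int.self_sub_floor] at this
    rw [← h1]
    have h2 : ‖F (Int.fract t)‖ ≤ Cζ * |Int.fract t - 0| := by
      apply intervalIntegral.norm_integral_le_of_norm_le_const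
      intro x _
      exact hCζ x
    have h3 : |Int.fract t - 0| ≤ 1 := by
      rw [sub_zero, abs_of_nonneg (Int.fract_nonneg t)]
      exact (Int.fract_lt_one t).le
    calc ‖F (Int.fract t)‖ ≤ Cζ * |Int.fract t - 0| := h2
      _ ≤ Cζ * 1 := by nlinarith [abs_nonneg (Int.fract t - 0)]
      _ = Cζ := mul_one Cζ
  have hFdiff : ∀ c d : ℝ, ‖∫ u in c..d, ζ u‖ ≤ 2 * Cζ := by
    intro c d
    have h1 : (∫ u in c..d, ζ u) = F d - F c :=
      (intervalIntegral.integral_interval_sub_left (hζint 0 d) (hζint 0 c)).symm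
    rw [h1]
    calc ‖F d - F c‖ ≤ ‖F d‖ + ‖F c‖ := norm_sub_le _ _
      _ ≤ Cζ + Cζ := add_le_add (hFbdd d) (hFbdd c)
      _ = 2 * Cζ := by ring
  -- the rescaled ζ
  have hζncomp : ∀ n : ℕ, StronglyMeasurable (fun t : ℝ => ζ ((n:ℝ) * t / T)) := fun n =>
    hζmeas.comp_measurable (by fun_prop)
  have hζnint : ∀ n : ℕ, ∀ a b : ℝ,
      IntervalIntegrable (fun t => ζ ((n:ℝ) * t / T)) volume a b := fun n a b =>
    aux_intervalIntegrable _ a b Cζ (hζncomp n).aestronglyMeasurable.restrict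
      (Eventually.of_forall fun t => hCζ _)
  have hosc : ∀ n : ℕ, 1 ≤ n → ∀ a b : ℝ,
      ‖∫ t in a..b, ζ ((n:ℝ) * t / T)‖ ≤ 2 * Cζ * T / n := by
    intro n hn a b
    have hn0 : (0:ℝ) < n := by exact_mod_cast hn
    have hc : ((n:ℝ) / T) ≠ 0 := by positivity
    have heq : ∀ t : ℝ, (n:ℝ) * t / T = ((n:ℝ)/T) * t := fun t => by ring
    simp_rw [heq]
    rw [intervalIntegral.integral_comp_mul_left ζ hc]
    rw [norm_smul]
    have h4 : ‖((n:ℝ)/T)⁻¹‖ = T / n := by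
      rw [Real.norm_eq_abs, abs_of_nonneg (by positivity)]
      rw [inv_div]
    rw [h4]
    calc T / n * ‖∫ u in ((n:ℝ)/T)*a..((n:ℝ)/T)*b, ζ u‖
        ≤ T / n * (2 * Cζ) := by
          apply mul_le_mul_of_nonneg_left (hFdiff _ _) (by positivity)
      _ = 2 * Cζ * T / n := by ring
  -- measurability of χ n
  have hχmeas : ∀ n, AEStronglyMeasurable (χ n) (volume.restrict (Set.Icc 0 T)) :=
    fun n => (hχcont n).aestronglyMeasurable measurableSet_Icc
  have hBcont : Continuous (fun p : X × Y => B p.1 p.2) :=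
    isBoundedBilinearMap_apply.continuous.comp
      ((B.continuous.comp continuous_fst).prodMk continuous_snd)
  -- measurability and integrability of the full integrand on good intervals
  have hBmeas : ∀ (n : ℕ) (g : ℝ → Y), AEStronglyMeasurable g (volume.restrict (Set.Icc 0 T)) →
      ∀ a b : ℝ, Set.uIoc a b ⊆ Set.Icc 0 T →
      AEStronglyMeasurable (fun t => B (ζ ((n:ℝ) * t / T)) (g t))
        (volume.restrict (Set.uIoc a b)) := by
    intro n g hg a b hsub
    have h1 : AEStronglyMeasurable (fun t => ζ ((n:ℝ) * t / T))
        (volume.restrict (Set.uIoc a b)) := (hζncomp n).aestronglyMeasurable.restrict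
    have h2 : AEStronglyMeasurable g (volume.restrict (Set.uIoc a b)) :=
      hg.mono_measure (Measure.restrict_mono hsub le_rfl)
    exact hBcont.comp_aestronglyMeasurable (h1.prodMk h2)
  have hBint : ∀ (n : ℕ) (a b : ℝ), Set.uIoc a b ⊆ Set.Icc 0 T →
      IntervalIntegrable (fun t => B (ζ ((n:ℝ) * t / T)) (χ n t)) volume a b := by
    intro n a b hsub
    apply aux_intervalIntegrable _ a b (‖B‖ * Cζ * Cχ) (hBmeas n (χ n) (hχmeas n) a b hsub)
    filter_upwards [ae_restrict_mem measurableSet_uIoc] with t ht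
    calc ‖B (ζ ((n:ℝ) * t / T)) (χ n t)‖ ≤ ‖B‖ * ‖ζ ((n:ℝ) * t / T)‖ * ‖χ n t‖ :=
          B.le_opNorm₂ _ _
      _ ≤ ‖B‖ * Cζ * Cχ := by
          gcongr
          · exact hCζ _
          · exact hCχ n t (hsub ht)
  -- main argument
  rw [NormedAddCommGroup.tendsto_nhds_zero]
  intro ε hε
  have hden : (0:ℝ) < ‖B‖ * Cζ * T + 1 := by positivity
  set ε₁ : ℝ := ε / (2 * (‖B‖ * Cζ * T + 1)) with hε₁def
  have hε₁ : 0 < ε₁ := by positivity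
  obtain ⟨δ, hδ, hδε⟩ := hequi ε₁ hε₁
  set K : ℕ := max 1 ⌈t₀ / δ⌉₊ with hKdef
  have hK1 : 1 ≤ K := le_max_left _ _
  have hK0 : (0:ℝ) < K := by exact_mod_cast hK1
  have hstep : t₀ / K ≤ δ := by
    rw [div_le_iff₀ hK0]
    have h1 : t₀ / δ ≤ (K:ℝ) := le_trans (Nat.le_ceil _)
      (by exact_mod_cast le_max_right 1 ⌈t₀ / δ⌉₊)
    have h2 : t₀ = (t₀ / δ) * δ := by field_simp
    nlinarith
  set a : ℕ → ℝ := fun j => t₀ * j / K with hadef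
  have ha0 : a 0 = 0 := by simp [hadef]
  have haK : a K = t₀ := by show t₀ * (K:ℝ) / K = t₀; exact mul_div_cancel_right₀ t₀ hK0.ne'
  have hamono : ∀ j : ℕ, a j ≤ a (j+1) := by
    intro j
    show t₀ * (j:ℝ) / K ≤ t₀ * ((j+1:ℕ):ℝ) / K
    have hle : (j:ℝ) ≤ ((j+1:ℕ):ℝ) := by exact_mod_cast Nat.le_succ j
    gcongr
  have hamem : ∀ j : ℕ, j ≤ K → a j ∈ Set.Icc (0:ℝ) T := by
    intro j hj
    constructor
    · positivity
    · rw [hadef]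
      have hjK : (j:ℝ) ≤ (K:ℝ) := by exact_mod_cast hj
      rw [div_le_iff₀ hK0]
      nlinarith
  have hsub : ∀ j : ℕ, j < K → Set.uIoc (a j) (a (j+1)) ⊆ Set.Icc (0:ℝ) T := by
    intro j hj
    refine Set.uIoc_subset_uIcc.trans (Set.uIcc_subset_Icc (hamem j hj.le) (hamem (j+1) hj))
  have hdiff : ∀ j : ℕ, a (j+1) - a j = t₀ / K := by
    intro j
    rw [hadef]
    push_cast
    field_simp
    ring
  -- key estimate
  have key : ∀ n : ℕ, 1 ≤ n →
      ‖∫ t in (0:ℝ)..t₀, B (ζ ((n:ℝ) * t / T)) (χ n t)‖ ≤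
        ‖B‖ * Cζ * ε₁ * t₀ + K * (‖B‖ * Cχ * (2 * Cζ * T / n)) := by
    intro n hn
    have hsum : (∑ j ∈ Finset.range K,
        ∫ t in (a j)..(a (j+1)), B (ζ ((n:ℝ) * t / T)) (χ n t))
        = ∫ t in (0:ℝ)..t₀, B (ζ ((n:ℝ) * t / T)) (χ n t) := by
      rw [intervalIntegral.sum_integral_adjacent_intervals (fun j hj => hBint n _ _ (hsub j hj))]
      rw [ha0, haK]
    rw [← hsum]
    refine le_trans (norm_sum_le _ _) ?_
    have hterm : ∀ j ∈ Finset.range K,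
        ‖∫ t in (a j)..(a (j+1)), B (ζ ((n:ℝ) * t / T)) (χ n t)‖ ≤
          ‖B‖ * Cζ * ε₁ * (t₀ / K) + ‖B‖ * Cχ * (2 * Cζ * T / n) := by
      intro j hj
      rw [Finset.mem_range] at hj
      have hjsub := hsub j hj
      have hajm := hamem j hj.le
      -- split the integrand
      have hsplit : ∀ t : ℝ, B (ζ ((n:ℝ) * t / T)) (χ n t)
          = B (ζ ((n:ℝ) * t / T)) (χ n t - χ n (a j))
            + B (ζ ((n:ℝ) * t / T)) (χ n (a j)) := by
        intro t
        rw [map_sub]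
        abel
      have hcm : AEStronglyMeasurable (fun _ : ℝ => χ n (a j))
          (volume.restrict (Set.Icc (0:ℝ) T)) := aestronglyMeasurable_const
      have hint2 : IntervalIntegrable (fun t => B (ζ ((n:ℝ) * t / T)) (χ n (a j)))
          volume (a j) (a (j+1)) := by
        apply aux_intervalIntegrable _ _ _ (‖B‖ * Cζ * ‖χ n (a j)‖)
          (hBmeas n _ hcm _ _ hjsub)
        filter_upwards with t
        calc ‖B (ζ ((n:ℝ) * t / T)) (χ n (a j))‖
            ≤ ‖B‖ * ‖ζ ((n:ℝ) * t / T)‖ * ‖χ n (a j)‖ := B.le_opNorm₂ _ _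
          _ ≤ ‖B‖ * Cζ * ‖χ n (a j)‖ := by
              gcongr
              exact hCζ _
      have hint1 : IntervalIntegrable (fun t => B (ζ ((n:ℝ) * t / T)) (χ n t - χ n (a j)))
          volume (a j) (a (j+1)) := by
        have : (fun t => B (ζ ((n:ℝ) * t / T)) (χ n t - χ n (a j)))
            = fun t => B (ζ ((n:ℝ) * t / T)) (χ n t) - B (ζ ((n:ℝ) * t / T)) (χ n (a j)) := by
          funext t; rw [map_sub]
        rw [this]
        exact (hBint n _ _ hjsub).sub hint2
      have heqsplit : (∫ t in (a j)..(a (j+1)), B (ζ ((n:ℝ) * t / T)) (χ n t))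
          = (∫ t in (a j)..(a (j+1)), B (ζ ((n:ℝ) * t / T)) (χ n t - χ n (a j)))
            + ∫ t in (a j)..(a (j+1)), B (ζ ((n:ℝ) * t / T)) (χ n (a j)) := by
        rw [← intervalIntegral.integral_add hint1 hint2]
        exact intervalIntegral.integral_congr fun t _ => hsplit t
      rw [heqsplit]
      refine le_trans (norm_add_le _ _) (add_le_add ?_ ?_)
      · -- equicontinuity part
        have hbound : ∀ t ∈ Set.uIoc (a j) (a (j+1)),
            ‖B (ζ ((n:ℝ) * t / T)) (χ n t - χ n (a j))‖ ≤ ‖B‖ * Cζ * ε₁ := by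
          intro t ht
          have htIcc : t ∈ Set.Icc (0:ℝ) T := hjsub ht
          have htIoc : t ∈ Set.Ioc (a j) (a (j+1)) := by
            rwa [Set.uIoc_of_le (hamono j)] at ht
          have hclose : |t - a j| ≤ δ := by
            rw [abs_of_nonneg (by linarith [htIoc.1])]
            have := htIoc.2
            have := hdiff j
            linarith [hstep]
          have hχclose : ‖χ n t - χ n (a j)‖ ≤ ε₁ := hδε n (a j) hajm t htIcc hclose
          calc ‖B (ζ ((n:ℝ) * t / T)) (χ n t - χ n (a j))‖
              ≤ ‖B‖ * ‖ζ ((n:ℝ) * t / T)‖ * ‖χ n t - χ n (a j)‖ := B.le_opNorm₂ _ _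
            _ ≤ ‖B‖ * Cζ * ε₁ := by
                gcongr <;> first | exact hCζ _ | exact hχclose
        have := intervalIntegral.norm_integral_le_of_norm_le_const hbound
        have habs : |a (j+1) - a j| = t₀ / K := by
          rw [hdiff j, abs_of_nonneg (by positivity)]
        rw [habs] at this
        linarith
      · -- oscillation part
        have heqL : (∫ t in (a j)..(a (j+1)), B (ζ ((n:ℝ) * t / T)) (χ n (a j)))
            = (B.flip (χ n (a j))) (∫ t in (a j)..(a (j+1)), ζ ((n:ℝ) * t / T)) := by
          rw [← ContinuousLinearMap.intervalIntegral_comp_comm _ (hζnint n _ _)]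
          rfl
        rw [heqL]
        calc ‖(B.flip (χ n (a j))) (∫ t in (a j)..(a (j+1)), ζ ((n:ℝ) * t / T))‖
            ≤ ‖B.flip (χ n (a j))‖ * ‖∫ t in (a j)..(a (j+1)), ζ ((n:ℝ) * t / T)‖ :=
              ContinuousLinearMap.le_opNorm _ _
          _ ≤ (‖B‖ * Cχ) * (2 * Cζ * T / n) := by
              apply mul_le_mul _ (hosc n hn _ _) (norm_nonneg _) (by positivity)
              calc ‖B.flip (χ n (a j))‖ ≤ ‖B.flip‖ * ‖χ n (a j)‖ :=
                    ContinuousLinearMap.le_opNorm _ _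
                _ = ‖B‖ * ‖χ n (a j)‖ := by rw [ContinuousLinearMap.opNorm_flip]
                _ ≤ ‖B‖ * Cχ := by
                    gcongr
                    exact hCχ n (a j) hajm
          _ = ‖B‖ * Cχ * (2 * Cζ * T / n) := by ring
    calc (∑ j ∈ Finset.range K, ‖∫ t in (a j)..(a (j+1)), B (ζ ((n:ℝ) * t / T)) (χ n t)‖)
        ≤ ∑ _j ∈ Finset.range K,
            (‖B‖ * Cζ * ε₁ * (t₀ / K) + ‖B‖ * Cχ * (2 * Cζ * T / n)) :=
          Finset.sum_le_sum hterm
      _ = K * (‖B‖ * Cζ * ε₁ * (t₀ / K) + ‖B‖ * Cχ * (2 * Cζ * T / n)) := by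
          rw [Finset.sum_const, Finset.card_range, nsmul_eq_mul]
      _ = ‖B‖ * Cζ * ε₁ * t₀ + K * (‖B‖ * Cχ * (2 * Cζ * T / n)) := by
          field_simp
  -- first term is at most ε / 2
  have hfirst : ‖B‖ * Cζ * ε₁ * t₀ ≤ ε / 2 := by
    have h1 : ε₁ * (‖B‖ * Cζ * T + 1) = ε / 2 := by
      rw [hε₁def]; field_simp
    nlinarith [norm_nonneg B, hε₁.le]
  -- second term tends to zero
  set D : ℝ := (K:ℝ) * (‖B‖ * Cχ * (2 * Cζ * T)) with hDdef
  have htend : Tendsto (fun n : ℕ => D / n) atTop (nhds 0) :=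
    tendsto_const_div_atTop_nhds_zero_nat D
  have hev : ∀ᶠ n : ℕ in atTop, D / n < ε / 2 :=
    htend.eventually (gt_mem_nhds (half_pos hε))
  filter_upwards [hev, eventually_ge_atTop 1] with n hn1 hn2
  have hn0 : (0:ℝ) < n := by exact_mod_cast hn2
  have heqD : (K:ℝ) * (‖B‖ * Cχ * (2 * Cζ * T / n)) = D / n := by
    rw [hDdef]; field_simp
  calc ‖∫ t in (0:ℝ)..t₀, B (ζ ((n:ℝ) * t / T)) (χ n t)‖
      ≤ ‖B‖ * Cζ * ε₁ * t₀ + K * (‖B‖ * Cχ * (2 * Cζ * T / n)) := key n hn2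
    _ = ‖B‖ * Cζ * ε₁ * t₀ + D / n := by rw [heqD]
    _ < ε / 2 + ε / 2 := by
        apply add_lt_add_of_le_of_lt hfirst hn1
    _ = ε := by ring
end
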